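/- Let f: R → (0,1) be a strictly increasing C^1 function with f(t) → 0 as t → −∞ and f(t) → 1 as t → ∞. Then for every compact interval I ⊂ R and every ε > 0, there exist M ∈ N, weights w_i > 0 summing to 1, slopes a_i > 0, and offsets b_i ∈ R such that h(t) = ∑_{i=1}^M w_i σ(a_i t + b_i) satisfies max over t ∈ I of max(|f(t) − h(t)|, |f'(t) − h'(t)|) < ε. -/

import Mathlib

open Filter

noncomputable def Lg (x : ℝ) : ℝ := (1 + Real.exp (-x))⁻¹
noncomputable def Dg (x : ℝ) : ℝ := Real.exp (-x) / (1 + Real.exp (-x)) ^ 2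

lemma one_add_exp_pos (x : ℝ) : 0 < 1 + Real.exp (-x) := by positivity

lemma Lg_pos (x : ℝ) : 0 < Lg x := by unfold Lg; positivity

lemma Lg_lt_one (x : ℝ) : Lg x < 1 := by
  unfold Lg
  rw [inv_lt_one_iff₀]
  right
  linarith [Real.exp_pos (-x)]

lemma Lg_mono : Monotone Lg := by
  intro x y h
  unfold Lg
  have h1 : 0 < 1 + Real.exp (-y) := one_add_exp_pos y
  have h2 : Real.exp (-y) ≤ Real.exp (-x) := Real.exp_le_exp.mpr (by linarith)
  exact inv_anti₀ h1 (by linarith)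

lemma Lg_le_exp (x : ℝ) : Lg x ≤ Real.exp x := by
  have h1 : 0 < 1 + Real.exp (-x) := one_add_exp_pos x
  have h2 : Real.exp (-x) * Real.exp x = 1 := by rw [← Real.exp_add]; simp
  rw [Lg, inv_eq_one_div, div_le_iff₀ h1]
  nlinarith [Real.exp_pos x, Real.exp_pos (-x)]

lemma one_sub_Lg_le (x : ℝ) : 1 - Lg x ≤ Real.exp (-x) := by
  have h1 : 0 < 1 + Real.exp (-x) := one_add_exp_pos x
  have h2 : (1 + Real.exp (-x))⁻¹ * (1 + Real.exp (-x)) = 1 := inv_mul_cancel₀ (ne_of_gt h1)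
  have h3 : 0 < (1 + Real.exp (-x))⁻¹ := by positivity
  rw [Lg]
  nlinarith [Real.exp_pos (-x)]

lemma Dg_nonneg (x : ℝ) : 0 ≤ Dg x := by unfold Dg; positivity

lemma Dg_le_exp_neg (x : ℝ) : Dg x ≤ Real.exp (-x) := by
  unfold Dg
  apply div_le_self (Real.exp_pos (-x)).le
  nlinarith [Real.exp_pos (-x)]

lemma Dg_le_exp (x : ℝ) : Dg x ≤ Real.exp x := by
  have h2 : Real.exp x * Real.exp (-x) = 1 := by rw [← Real.exp_add]; simp
  have h3 : Real.exp x * Real.exp (-x) ^ 2 = Real.exp (-x) := by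
    rw [pow_two, ← mul_assoc, h2, one_mul]
  rw [Dg, div_le_iff₀ (by positivity)]
  nlinarith [Real.exp_pos x, Real.exp_pos (-x)]

lemma Dg_le_exp_neg_abs (x : ℝ) : Dg x ≤ Real.exp (-|x|) := by
  rcases le_or_gt 0 x with h | h
  · rw [abs_of_nonneg h]; exact Dg_le_exp_neg x
  · rw [abs_of_neg h, neg_neg]; exact Dg_le_exp x

lemma Dg_aux (u v E : ℝ) (hu : 0 < u) (hv : 0 < v) (hE : 1 ≤ E)
    (h1 : v ≤ E * u) (h2 : u ≤ E * v) :
    v / (1 + v) ^ 2 ≤ E * (u / (1 + u) ^ 2) := by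
  rw [mul_div_assoc', div_le_div_iff₀ (by positivity) (by positivity)]
  nlinarith [mul_pos hu hv, mul_le_mul_of_nonneg_right h2 (mul_pos hu hv).le,
    mul_le_mul_of_nonneg_right h1 (mul_pos hu hv).le,
    mul_le_mul_of_nonneg_right h1 hu.le, mul_le_mul_of_nonneg_right h2 hv.le]

lemma Dg_le_exp_mul (x y : ℝ) : Dg y ≤ Real.exp |y - x| * Dg x := by
  unfold Dg
  apply Dg_aux _ _ _ (Real.exp_pos _) (Real.exp_pos _) (by
    calc (1:ℝ) = Real.exp 0 := by simp
    _ ≤ Real.exp |y - x| := Real.exp_le_exp.mpr (abs_nonneg _))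
  · rw [← Real.exp_add]
    apply Real.exp_le_exp.mpr
    linarith [le_abs_self (x - y), (abs_sub_comm x y ▸ le_abs_self (x-y) : x - y ≤ |y - x|)]
  · rw [← Real.exp_add]
    apply Real.exp_le_exp.mpr
    linarith [le_abs_self (y - x)]

lemma Dg_diff_le (x y : ℝ) : |Dg x - Dg y| ≤ (Real.exp |x - y| - 1) * Dg x := by
  have hxy : |y - x| = |x - y| := abs_sub_comm y x
  have h1 : Dg y ≤ Real.exp |x - y| * Dg x := hxy ▸ Dg_le_exp_mul x y
  have h2 : Dg x ≤ Real.exp |x - y| * Dg y := Dg_le_exp_mul y x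
  have hE : (1:ℝ) ≤ Real.exp |x - y| := by
    calc (1:ℝ) = Real.exp 0 := by simp
    _ ≤ _ := Real.exp_le_exp.mpr (abs_nonneg _)
  rw [abs_sub_le_iff]
  constructor
  · nlinarith [Dg_nonneg x, Dg_nonneg y, sq_nonneg (Real.exp |x - y| - 1),
      mul_le_mul_of_nonneg_left h2 (by linarith : (0:ℝ) ≤ Real.exp |x - y|)]
  · nlinarith [Dg_nonneg x]

lemma hasDerivAt_Lg (x : ℝ) : HasDerivAt Lg (Dg x) x := by
  have h1 : HasDerivAt (fun y : ℝ => -y) (-1 : ℝ) x := (hasDerivAt_id x).neg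
  have h2 : HasDerivAt (fun y : ℝ => Real.exp (-y)) (-Real.exp (-x)) x := by
    have h := (Real.hasDerivAt_exp (-x)).comp x h1
    rw [mul_neg_one] at h
    exact h
  have h3 : HasDerivAt (fun y : ℝ => 1 + Real.exp (-y)) (-Real.exp (-x)) x := h2.const_add 1
  have h4 := h3.inv (ne_of_gt (one_add_exp_pos x))
  have : Dg x = -(-Real.exp (-x)) / (1 + Real.exp (-x)) ^ 2 := by rw [Dg]; ring
  rw [this]
  exact h4

lemma abel_sum (F G : ℕ → ℝ) (m : ℕ) :
    ∑ i ∈ Finset.range (m + 1), (F (i+1) - F i) * G i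
      = F (m+1) * G m - F 0 * G 0 - ∑ j ∈ Finset.range m, F (j+1) * (G (j+1) - G j) := by
  induction m with
  | zero => simp; ring
  | succ k ih =>
    rw [Finset.sum_range_succ, ih, Finset.sum_range_succ]
    ring

lemma poly_exp (c : ℝ) (hc : 0 < c) (k : ℕ) :
    Tendsto (fun n : ℕ => (n:ℝ)^k * Real.exp (-(c*(n:ℝ)))) atTop (nhds 0) := by
  have h1 : Tendsto (fun n : ℕ => c*(n:ℝ)) atTop atTop :=
    (tendsto_natCast_atTop_atTop).const_mul_atTop hc
  have h2 := (Real.tendsto_pow_mul_exp_neg_atTop_nhds_zero k).comp h1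
  have h3 := h2.const_mul ((c^k)⁻¹)
  rw [mul_zero] at h3
  refine h3.congr fun n => ?_
  have hck : (c:ℝ)^k ≠ 0 := (pow_pos hc k).ne'
  simp only [Function.comp, mul_pow]
  field_simp

set_option maxHeartbeats 2000000 in
/-- Density of convex combinations of sigmoids in C¹ on compact intervals. -/
theorem stmt_12 (f : ℝ → ℝ) (hf : StrictMono f) (hf1 : ContDiff ℝ 1 f)
    (hrange : ∀ t, f t ∈ Set.Ioo (0 : ℝ) 1)
    (hbot : Tendsto f atBot (nhds 0)) (htop : Tendsto f atTop (nhds 1))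
    (s0 s1 : ℝ) (hs : s0 ≤ s1) (ε : ℝ) (hε : 0 < ε) :
    ∃ (M : ℕ) (w a b : Fin M → ℝ),
      (∀ i, 0 < w i) ∧ (∑ i, w i = 1) ∧ (∀ i, 0 < a i) ∧
      ∀ t ∈ Set.Icc s0 s1,
        |f t - ∑ i, w i * (1 + Real.exp (-(a i * t + b i)))⁻¹| < ε ∧
        |deriv f t -
          deriv (fun u : ℝ => ∑ i, w i * (1 + Real.exp (-(a i * u + b i)))⁻¹) t| < ε := by
  have hfd : Differentiable ℝ f := hf1.differentiable one_ne_zero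
  have hfc : Continuous f := hf1.continuous
  have hf'c : Continuous (deriv f) := hf1.continuous_deriv le_rfl
  have hKc : IsCompact (Set.Icc (s0-3) (s1+3)) := isCompact_Icc
  -- uniform continuity moduli
  have huc : ∀ g : ℝ → ℝ, Continuous g → ∀ e : ℝ, 0 < e →
      ∃ δ, 0 < δ ∧ ∀ x ∈ Set.Icc (s0-3) (s1+3), ∀ y ∈ Set.Icc (s0-3) (s1+3),
        |x - y| < δ → |g x - g y| ≤ e := by
    intro g hg e he
    have h1 := hKc.uniformContinuousOn_of_continuous hg.continuousOn
    rw [Metric.uniformContinuousOn_iff] at h1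
    obtain ⟨δ, hδ, hd⟩ := h1 e he
    refine ⟨δ, hδ, fun x hx y hy hxy => ?_⟩
    have := hd x hx y hy (by rwa [Real.dist_eq])
    rw [Real.dist_eq] at this
    exact this.le
  obtain ⟨δ1, hδ1, hmodf⟩ := huc f hfc (ε/4) (by positivity)
  obtain ⟨δ2, hδ2, hmodd⟩ := huc (deriv f) hf'c (ε/16) (by positivity)
  -- bound on deriv f
  obtain ⟨B0, hB0⟩ := hKc.exists_bound_of_continuousOn hf'c.continuousOn
  set B := max B0 1 with hBdef
  have hB1 : (1:ℝ) ≤ B := le_max_right _ _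
  have hB : ∀ x ∈ Set.Icc (s0-3) (s1+3), |deriv f x| ≤ B := by
    intro x hx
    calc |deriv f x| ≤ B0 := by simpa [Real.norm_eq_abs] using hB0 x hx
    _ ≤ B := le_max_left _ _
  -- scale r
  set r := min (min δ1 δ2) 2 / 2 with hrdef
  have hr0 : 0 < r := by
    apply div_pos _ two_pos
    exact lt_min (lt_min hδ1 hδ2) two_pos
  have hr1 : r ≤ 1 := by
    rw [hrdef]
    have : min (min δ1 δ2) 2 ≤ 2 := min_le_right _ _
    linarith
  have hrδ1 : 2 * r ≤ δ1 := by
    rw [hrdef]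
    have h1 : min (min δ1 δ2) 2 ≤ δ1 := le_trans (min_le_left _ _) (min_le_left _ _)
    linarith
  have hrδ2 : 2 * r ≤ δ2 := by
    rw [hrdef]
    have h1 : min (min δ1 δ2) 2 ≤ δ2 := le_trans (min_le_left _ _) (min_le_right _ _)
    linarith
  set C := s1 - s0 + 4 with hCdef
  have hC4 : (4:ℝ) ≤ C := by rw [hCdef]; linarith
  have hCpos : (0:ℝ) < C := by linarith
  -- choice of n
  obtain ⟨n, hn2, e1, e2, e3, e4, e6⟩ :
      ∃ n : ℕ, 2 ≤ n ∧
        (⌈C⌉₊ : ℝ) * ((n:ℝ)^2 * Real.exp (-(r/2 * (n:ℝ)))) ≤ ε/4 ∧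
        Real.exp (-(1 * (n:ℝ))) ≤ ε/8 ∧
        3 * B * (Real.exp (1/(n:ℝ)) - 1) ≤ ε/8 ∧
        (2*B*C*(n:ℝ) + 2*(n:ℝ) + 4*B) * Real.exp (-(r * (n:ℝ))) ≤ ε/8 ∧
        1/(n:ℝ) ≤ min 1 (r/3) := by
    have T1 : Tendsto (fun n : ℕ => (⌈C⌉₊ : ℝ) * ((n:ℝ)^2 * Real.exp (-(r/2 * (n:ℝ)))))
        atTop (nhds 0) := by
      simpa using (poly_exp (r/2) (by positivity) 2).const_mul (⌈C⌉₊ : ℝ)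
    have T2 : Tendsto (fun n : ℕ => Real.exp (-(1 * (n:ℝ)))) atTop (nhds 0) := by
      simpa using poly_exp 1 one_pos 0
    have T3 : Tendsto (fun n : ℕ => 3 * B * (Real.exp (1/(n:ℝ)) - 1)) atTop (nhds 0) := by
      have h0 : Tendsto (fun n : ℕ => 1/(n:ℝ)) atTop (nhds 0) :=
        tendsto_one_div_atTop_nhds_zero_nat
      have h1 := (Real.continuous_exp.tendsto 0).comp h0
      have h2 := h1.sub_const 1
      have h3 := h2.const_mul (3*B)
      simpa using h3
    have T4 : Tendsto (fun n : ℕ => (2*B*C*(n:ℝ) + 2*(n:ℝ) + 4*B) * Real.exp (-(r * (n:ℝ))))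
        atTop (nhds 0) := by
      have p1 := (poly_exp r hr0 1).const_mul (2*B*C + 2)
      have p0 := (poly_exp r hr0 0).const_mul (4*B)
      have hsum := p1.add p0
      rw [mul_zero, mul_zero, add_zero] at hsum
      refine hsum.congr fun n => by ring
    have T6 : Tendsto (fun n : ℕ => 1/(n:ℝ)) atTop (nhds 0) :=
      tendsto_one_div_atTop_nhds_zero_nat
    have hmin : (0:ℝ) < min 1 (r/3) := lt_min one_pos (by positivity)
    have E := (eventually_ge_atTop 2).and
      ((T1.eventually (eventually_le_nhds (by positivity : (0:ℝ) < ε/4))).and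
      ((T2.eventually (eventually_le_nhds (by positivity : (0:ℝ) < ε/8))).and
      ((T3.eventually (eventually_le_nhds (by positivity : (0:ℝ) < ε/8))).and
      ((T4.eventually (eventually_le_nhds (by positivity : (0:ℝ) < ε/8))).and
      (T6.eventually (eventually_le_nhds hmin))))))
    obtain ⟨n, hn⟩ := E.exists
    exact ⟨n, hn.1, hn.2.1, hn.2.2.1, hn.2.2.2.1, hn.2.2.2.2.1, hn.2.2.2.2.2⟩
  -- basic facts about n
  have hn0 : 0 < n := by omega
  have hn0R : (0:ℝ) < (n:ℝ) := by exact_mod_cast hn0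
  have hn1R : (1:ℝ) ≤ (n:ℝ) := by exact_mod_cast hn0
  have h1nle1 : 1/(n:ℝ) ≤ 1 := le_trans e6 (min_le_left _ _)
  have h1nler : 1/(n:ℝ) ≤ r/3 := le_trans e6 (min_le_right _ _)
  have hceil : (C:ℝ) ≤ (⌈C⌉₊:ℝ) := Nat.le_ceil C
  have hceil4 : 4 ≤ ⌈C⌉₊ := by exact_mod_cast le_trans hC4 hceil
  set N := ⌈C⌉₊ * n ^ 2 with hNdef
  have hNcast : (N:ℝ) = (⌈C⌉₊:ℝ) * (n:ℝ)^2 := by rw [hNdef]; push_cast; ring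
  have hNR : (0:ℝ) < (N:ℝ) := by
    rw [hNcast]; nlinarith [hceil, hC4, hn1R]
  have hN2 : 2 ≤ N := by
    have h4 : 4 ≤ n^2 := by nlinarith
    calc 2 ≤ 4 * 4 := by norm_num
    _ ≤ ⌈C⌉₊ * n^2 := Nat.mul_le_mul hceil4 h4
  set Δ := C / (N:ℝ) with hΔdef
  have hΔpos : 0 < Δ := div_pos hCpos hNR
  have hNΔ : (N:ℝ) * Δ = C := by rw [hΔdef]; field_simp
  have hΔle : Δ ≤ 1/(n:ℝ)^2 := by
    rw [hΔdef, div_le_div_iff₀ hNR (by positivity), hNcast]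
    nlinarith [hceil, sq_nonneg (n:ℝ)]
  have hΔn : Δ * (n:ℝ) ≤ 1/(n:ℝ) := by
    have h1 : Δ * (n:ℝ) ≤ (1/(n:ℝ)^2) * (n:ℝ) :=
      mul_le_mul_of_nonneg_right hΔle hn0R.le
    have h2 : (1/(n:ℝ)^2) * (n:ℝ) = 1/(n:ℝ) := by field_simp
    linarith
  have hΔ1 : Δ ≤ 1 := by nlinarith
  have hΔr : Δ ≤ r/3 := by nlinarith
  set L := s0 - 2 with hLdef
  set X : ℕ → ℝ := fun j => L + j * Δ with hXdef
  set cc : ℕ → ℝ := fun j => L + j * Δ - Δ/2 with hccdef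
  have hXd : ∀ j : ℕ, X (j+1) - X j = Δ := by
    intro j; simp only [hXdef]; push_cast; ring
  have hXlt : ∀ j : ℕ, X j < X (j+1) := by
    intro j; have := hXd j; linarith
  have hXmono : ∀ j k : ℕ, j ≤ k → X j ≤ X k := by
    intro j k h
    simp only [hXdef]
    have hjk : (j:ℝ) ≤ (k:ℝ) := by exact_mod_cast h
    nlinarith
  have hXN : X N = s1 + 2 := by
    simp only [hXdef]
    rw [hNΔ, hLdef, hCdef]; ring
  have hX0 : X 0 = L := by simp [hXdef]
  have hXK : ∀ j, j ≤ N → X j ∈ Set.Icc (s0-3) (s1+3) := by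
    intro j hj
    constructor
    · have : (0:ℝ) ≤ (j:ℝ) * Δ := by positivity
      simp only [hXdef, hLdef]; linarith
    · have := hXmono j N hj
      rw [hXN] at this; linarith
  have hccX : ∀ j : ℕ, cc (j+1) = X j + Δ/2 := by
    intro j; simp only [hXdef, hccdef]; push_cast; ring
  have hccX' : ∀ j : ℕ, cc (j+1) = X (j+1) - Δ/2 := by
    intro j; simp only [hXdef, hccdef]
  -- the weights
  set F : ℕ → ℝ := fun j => if j = 0 then 0 else if j < N then f (X j) else 1 with hFdef
  have hF0 : F 0 = 0 := by simp [hFdef]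
  have hFN : F N = 1 := by
    simp only [hFdef]
    rw [if_neg (by omega), if_neg (by omega)]
  have hFmid : ∀ j, 1 ≤ j → j < N → F j = f (X j) := by
    intro j h1 h2
    simp only [hFdef]
    rw [if_neg (by omega), if_pos h2]
  have hFnonneg : ∀ j, 0 ≤ F j := by
    intro j
    simp only [hFdef]
    split_ifs
    · norm_num
    · exact (hrange _).1.le
    · norm_num
  have hFle1 : ∀ j, F j ≤ 1 := by
    intro j
    simp only [hFdef]
    split_ifs
    · norm_num
    · exact (hrange _).2.le
    · norm_num
  clear_value B r C N Δ L X cc F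
  refine ⟨N, fun i => F (i.1+1) - F i.1, fun _ => (n:ℝ), fun i => -((n:ℝ) * cc (i.1+1)),
    ?_, ?_, ?_, ?_⟩
  · -- positivity of weights
    intro i
    show 0 < F (i.1+1) - F i.1
    have hi : i.1 < N := i.2
    by_cases h0 : i.1 = 0
    · rw [h0, hF0, hFmid 1 le_rfl (by omega)]
      have := (hrange (X 1)).1
      linarith
    · by_cases hN' : i.1 + 1 = N
      · rw [hN', hFN, hFmid i.1 (by omega) (by omega)]
        linarith [(hrange (X i.1)).2]
      · rw [hFmid (i.1+1) (by omega) (by omega), hFmid i.1 (by omega) (by omega)]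
        have := hf (hXlt i.1)
        linarith
  · -- weights sum to one
    show ∑ i : Fin N, (F (i.1+1) - F i.1) = 1
    rw [Fin.sum_univ_eq_sum_range (fun j => F (j+1) - F j) N, Finset.sum_range_sub F N,
      hFN, hF0]
    ring
  · intro i; exact hn0R
  · intro t ht
    obtain ⟨ht0, ht1⟩ := ht
    have htK : t ∈ Set.Icc (s0-3) (s1+3) :=
      ⟨by linarith only [ht0], by linarith only [ht1]⟩
    have hBt : |deriv f t| ≤ B := hB t htK
    have hft := hrange t
    set GG : ℕ → ℝ := fun j => Lg ((n:ℝ)*t - (n:ℝ)*cc (j+1)) with hGGdef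
    set Gx : ℕ → ℝ := fun j => Lg ((n:ℝ)*t - (n:ℝ)*X j) with hGxdef
    set DD : ℕ → ℝ := fun j => Dg ((n:ℝ)*t - (n:ℝ)*cc (j+1)) with hDDdef
    clear_value GG Gx DD
    -- position facts
    have hccN : cc N = X N - Δ/2 := by simp only [hccdef, hXdef]
    have htc1 : 1 ≤ t - cc 1 := by
      have h1 : cc 1 = X 0 + Δ/2 := hccX 0
      rw [hX0] at h1
      rw [h1, hLdef]; linarith only [ht0, hΔ1, hΔpos]
    have htcN : 1 ≤ cc N - t := by rw [hccN, hXN]; linarith only [ht1, hΔ1, hΔpos]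
    have htX0 : 1 ≤ t - X 0 := by rw [hX0, hLdef]; linarith only [ht0]
    have htXN : 1 ≤ X N - t := by rw [hXN]; linarith only [ht1]
    have htX1 : 1 ≤ t - X 1 := by
      have h1 : X 1 = X 0 + Δ := by have h2 := hXd 0; linarith only [h2]
      rw [h1, hX0, hLdef]; linarith only [ht0, hΔ1]
    have htXN1 : 1 ≤ X (N-1) - t := by
      have h1 : X (N-1) = X N - Δ := by
        have h2 : N - 1 + 1 = N := by omega
        have := hXd (N-1)
        rw [h2] at this; linarith only [this]
      rw [h1, hXN]; linarith only [ht1, hΔ1]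
    -- GG monotone facts
    have hGGle1 : ∀ j : ℕ, GG j ≤ 1 := by
      intro j; simp only [hGGdef]; exact (Lg_lt_one _).le
    have hGGnn : ∀ j : ℕ, 0 ≤ GG j := by
      intro j; simp only [hGGdef]; exact (Lg_pos _).le
    have hGGmono : ∀ j k : ℕ, j ≤ k → GG k ≤ GG j := by
      intro j k h
      simp only [hGGdef]
      apply Lg_mono
      have hjk : (j:ℝ) ≤ (k:ℝ) := by exact_mod_cast h
      have hkey : 0 ≤ (n:ℝ) * ((k:ℝ) - (j:ℝ)) * Δ :=
        mul_nonneg (mul_nonneg hn0R.le (by linarith only [hjk])) hΔpos.le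
      simp only [hccdef]
      push_cast
      linarith only [hkey]
    -- rewrite of the value sum
    have hval : (∑ i : Fin N, (F (i.1+1) - F i.1) *
          (1 + Real.exp (-((n:ℝ) * t + -((n:ℝ) * cc (i.1+1)))))⁻¹)
        = ∑ j ∈ Finset.range N, (F (j+1) - F j) * GG j := by
      rw [← Fin.sum_univ_eq_sum_range (fun j => (F (j+1) - F j) * GG j) N]
      apply Finset.sum_congr rfl
      intro i _
      have harg : (n:ℝ) * t + -((n:ℝ) * cc (i.1+1)) = (n:ℝ)*t - (n:ℝ)*cc (i.1+1) := by ring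
      rw [harg]
      simp only [hGGdef, Lg]
    obtain ⟨m, hm⟩ : ∃ m, N = m + 1 := ⟨N - 1, by omega⟩
    constructor
    · -- C⁰ estimate
      show |f t - ∑ i : Fin N, (F (i.1+1) - F i.1) *
          (1 + Real.exp (-((n:ℝ) * t + -((n:ℝ) * cc (i.1+1)))))⁻¹| < ε
      rw [hval]
      have habel2 : ∑ j ∈ Finset.range N, (F (j+1) - F j) * GG j
          = GG m - ∑ j ∈ Finset.range m, F (j+1) * (GG (j+1) - GG j) := by
        rw [hm, abel_sum F GG m]
        rw [show m + 1 = N from hm.symm, hFN, hF0]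
        ring
      have hkey : f t - (GG m - ∑ j ∈ Finset.range m, F (j+1) * (GG (j+1) - GG j))
          = f t * (1 - GG 0) + (∑ j ∈ Finset.range m, (f t - F (j+1)) * (GG j - GG (j+1)))
            - (1 - f t) * GG m := by
        have htel : ∑ j ∈ Finset.range m, (GG j - GG (j+1)) = GG 0 - GG m :=
          Finset.sum_range_sub' GG m
        have hsplit : ∑ j ∈ Finset.range m, (f t - F (j+1)) * (GG j - GG (j+1))
            = f t * (GG 0 - GG m) + ∑ j ∈ Finset.range m, F (j+1) * (GG (j+1) - GG j) := by
          rw [← htel, Finset.mul_sum, ← Finset.sum_add_distrib]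
          exact Finset.sum_congr rfl fun j _ => by ring
        rw [hsplit]; ring
      have hG0 : 1 - GG 0 ≤ Real.exp (-(1*(n:ℝ))) := by
        have h1 : GG 0 = Lg ((n:ℝ)*t - (n:ℝ)*cc 1) := by norm_num [hGGdef]
        rw [h1]
        refine (one_sub_Lg_le _).trans (Real.exp_le_exp.mpr ?_)
        have h5 : (n:ℝ)*1 ≤ (n:ℝ)*(t - cc 1) := mul_le_mul_of_nonneg_left htc1 hn0R.le
        linarith only [h5]
      have hGm : GG m ≤ Real.exp (-(1*(n:ℝ))) := by
        have h1 : GG m = Lg ((n:ℝ)*t - (n:ℝ)*cc N) := by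
          simp only [hGGdef]
          rw [← hm]
        rw [h1]
        refine (Lg_le_exp _).trans (Real.exp_le_exp.mpr ?_)
        have h5 : (n:ℝ)*1 ≤ (n:ℝ)*(cc N - t) := mul_le_mul_of_nonneg_left htcN hn0R.le
        linarith only [h5]
      have hterm : ∀ j ∈ Finset.range m, |(f t - F (j+1)) * (GG j - GG (j+1))|
          ≤ ε/4 * (GG j - GG (j+1)) + Real.exp (-(r/2*(n:ℝ))) := by
        intro j hj
        have hjm : j < m := Finset.mem_range.mp hj
        have hj1N : j + 1 < N := by omega
        have hFj : F (j+1) = f (X (j+1)) := hFmid (j+1) (by omega) hj1N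
        have hmono : GG (j+1) ≤ GG j := hGGmono j (j+1) (by omega)
        have hGnn : 0 ≤ GG j - GG (j+1) := by linarith only [hmono]
        rw [abs_mul, abs_of_nonneg hGnn]
        have hexppos : (0:ℝ) ≤ Real.exp (-(r/2*(n:ℝ))) := (Real.exp_pos _).le
        by_cases hnear : |X (j+1) - t| ≤ r
        · have hXjK : X (j+1) ∈ Set.Icc (s0-3) (s1+3) := hXK (j+1) (by omega)
          have h1 : |f t - f (X (j+1))| ≤ ε/4 := by
            apply hmodf t htK (X (j+1)) hXjK
            rw [abs_sub_comm] at hnear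
            linarith only [hnear, hrδ1, hr0]
          rw [hFj]
          have k1 := mul_le_mul_of_nonneg_right h1 hGnn
          linarith only [k1, hexppos]
        · push_neg at hnear
          have h1 : |f t - F (j+1)| ≤ 1 := by
            rw [hFj, abs_le]
            have r2 := hrange (X (j+1))
            constructor
            · linarith only [hft.1, r2.2]
            · linarith only [hft.2, r2.1]
          have h2 : GG j - GG (j+1) ≤ Real.exp (-(r/2*(n:ℝ))) := by
            rcases le_or_gt t (X (j+1)) with hcase | hcase
            · have hx : t + r < X (j+1) := by
                rw [abs_of_nonneg (by linarith only [hcase])] at hnear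
                linarith only [hnear]
              have hc := hccX' j
              have h3 : GG j ≤ Real.exp (-(r/2*(n:ℝ))) := by
                have h4 : GG j = Lg ((n:ℝ)*t - (n:ℝ)*cc (j+1)) := by simp only [hGGdef]
                rw [h4]
                refine (Lg_le_exp _).trans (Real.exp_le_exp.mpr ?_)
                have hs : t - cc (j+1) ≤ -(r/2) := by
                  rw [hc]; linarith only [hx, hΔr, hr0]
                have h6 : (n:ℝ)*(t - cc (j+1)) ≤ (n:ℝ)*(-(r/2)) :=
                  mul_le_mul_of_nonneg_left hs hn0R.le
                linarith only [h6]
              have hGp : 0 ≤ GG (j+1) := hGGnn (j+1)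
              linarith only [h3, hGp, hmono]
            · have hx : X (j+1) < t - r := by
                rw [abs_of_neg (by linarith only [hcase])] at hnear
                linarith only [hnear]
              have hc := hccX (j+1)
              have h3 : 1 - GG (j+1) ≤ Real.exp (-(r/2*(n:ℝ))) := by
                have h4 : GG (j+1) = Lg ((n:ℝ)*t - (n:ℝ)*cc (j+1+1)) := by simp only [hGGdef]
                rw [h4]
                refine (one_sub_Lg_le _).trans (Real.exp_le_exp.mpr ?_)
                have hs : r/2 ≤ t - cc (j+1+1) := by
                  rw [hc]; linarith only [hx, hΔr, hr0]
                have h6 : (n:ℝ)*(r/2) ≤ (n:ℝ)*(t - cc (j+1+1)) :=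
                  mul_le_mul_of_nonneg_left hs hn0R.le
                linarith only [h6]
              have hGle1 : GG j ≤ 1 := hGGle1 j
              linarith only [h3, hGle1]
          have k1 := mul_le_mul_of_nonneg_right h1 hGnn
          have k2 : 0 ≤ ε/4 * (GG j - GG (j+1)) := mul_nonneg (by linarith only [hε]) hGnn
          linarith only [k1, k2, h2]
      have hsum : |∑ j ∈ Finset.range m, (f t - F (j+1)) * (GG j - GG (j+1))|
          ≤ ε/4 + (N:ℝ)*Real.exp (-(r/2*(n:ℝ))) := by
        have c1 : |∑ j ∈ Finset.range m, (f t - F (j+1)) * (GG j - GG (j+1))|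
            ≤ ∑ j ∈ Finset.range m, |(f t - F (j+1)) * (GG j - GG (j+1))| :=
          Finset.abs_sum_le_sum_abs _ _
        have c2 : ∑ j ∈ Finset.range m, |(f t - F (j+1)) * (GG j - GG (j+1))|
            ≤ ∑ j ∈ Finset.range m, (ε/4 * (GG j - GG (j+1)) + Real.exp (-(r/2*(n:ℝ)))) :=
          Finset.sum_le_sum hterm
        have c3 : ∑ j ∈ Finset.range m, (ε/4 * (GG j - GG (j+1)) + Real.exp (-(r/2*(n:ℝ))))
            = ε/4 * (GG 0 - GG m) + (m:ℝ) * Real.exp (-(r/2*(n:ℝ))) := by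
          rw [Finset.sum_add_distrib, ← Finset.mul_sum, Finset.sum_range_sub' GG m,
            Finset.sum_const, Finset.card_range, nsmul_eq_mul]
        have c4 : ε/4 * (GG 0 - GG m) ≤ ε/4 * 1 := by
          have u1 := hGGle1 0; have u2 := hGGnn m
          apply mul_le_mul_of_nonneg_left _ (by linarith only [hε])
          linarith only [u1, u2]
        have c5 : (m:ℝ) * Real.exp (-(r/2*(n:ℝ))) ≤ (N:ℝ) * Real.exp (-(r/2*(n:ℝ))) := by
          have hmN : (m:ℝ) ≤ (N:ℝ) := by exact_mod_cast (by omega : m ≤ N)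
          exact mul_le_mul_of_nonneg_right hmN (Real.exp_pos _).le
        calc |∑ j ∈ Finset.range m, (f t - F (j+1)) * (GG j - GG (j+1))|
            ≤ ε/4 * (GG 0 - GG m) + (m:ℝ) * Real.exp (-(r/2*(n:ℝ))) := by
              rw [← c3]; exact c1.trans c2
        _ ≤ ε/4 * 1 + (N:ℝ) * Real.exp (-(r/2*(n:ℝ))) := by linarith only [c4, c5]
        _ = ε/4 + (N:ℝ)*Real.exp (-(r/2*(n:ℝ))) := by ring
      have hNe : (N:ℝ)*Real.exp (-(r/2*(n:ℝ))) ≤ ε/4 := by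
        have heq : (N:ℝ)*Real.exp (-(r/2*(n:ℝ)))
            = (⌈C⌉₊:ℝ) * ((n:ℝ)^2 * Real.exp (-(r/2 * (n:ℝ)))) := by
          rw [hNcast]; ring
        linarith only [e1, heq]
      have hA : |f t * (1 - GG 0)| ≤ Real.exp (-(1*(n:ℝ))) := by
        rw [abs_of_nonneg (mul_nonneg hft.1.le (by linarith only [hGGle1 0]))]
        have k1 : f t * (1 - GG 0) ≤ 1 * (1 - GG 0) :=
          mul_le_mul_of_nonneg_right hft.2.le (by linarith only [hGGle1 0])
        linarith only [k1, hG0]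
      have hCC : |(1 - f t) * GG m| ≤ Real.exp (-(1*(n:ℝ))) := by
        rw [abs_of_nonneg (mul_nonneg (by linarith only [hft.2]) (hGGnn m))]
        have k1 : (1 - f t) * GG m ≤ 1 * GG m :=
          mul_le_mul_of_nonneg_right (by linarith only [hft.1]) (hGGnn m)
        linarith only [k1, hGm]
      rw [habel2, hkey]
      have htri : |f t * (1 - GG 0) + (∑ j ∈ Finset.range m, (f t - F (j+1)) * (GG j - GG (j+1)))
            - (1 - f t) * GG m|
          ≤ |f t * (1 - GG 0)| + |∑ j ∈ Finset.range m, (f t - F (j+1)) * (GG j - GG (j+1))|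
            + |(1 - f t) * GG m| := by
        rw [sub_eq_add_neg]
        have h9 := abs_add_three (f t * (1 - GG 0))
          (∑ j ∈ Finset.range m, (f t - F (j+1)) * (GG j - GG (j+1)))
          (-((1 - f t) * GG m))
        rwa [abs_neg] at h9
      have hfin := htri.trans (add_le_add (add_le_add hA hsum) hCC)
      exact lt_of_le_of_lt hfin (by linarith only [e2, hNe, hε])
    · -- C¹ estimate
      show |deriv f t - deriv (fun u : ℝ => ∑ i : Fin N,
          (F (i.1+1) - F i.1) * (1 + Real.exp (-((n:ℝ) * u + -((n:ℝ) * cc (i.1+1)))))⁻¹) t| < ε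
      have htri2 : ∀ x y : ℝ, |x - y| ≤ |x| + |y| := fun x y => by
        have h := abs_add_le x (-y)
        rwa [abs_neg, ← sub_eq_add_neg] at h
      have hGxmono : ∀ j k : ℕ, j ≤ k → Gx k ≤ Gx j := by
        intro j k h
        simp only [hGxdef]
        apply Lg_mono
        have h1 := mul_le_mul_of_nonneg_left (hXmono j k h) hn0R.le
        linarith only [h1]
      have hGxle1 : ∀ j : ℕ, Gx j ≤ 1 := by
        intro j; simp only [hGxdef]; exact (Lg_lt_one _).le
      have hGxnn : ∀ j : ℕ, 0 ≤ Gx j := by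
        intro j; simp only [hGxdef]; exact (Lg_pos _).le
      have hDDnn : ∀ j : ℕ, 0 ≤ DD j := by
        intro j; simp only [hDDdef]; exact Dg_nonneg _
      have hφd : ∀ z : ℝ, HasDerivAt (fun z : ℝ => Lg ((n:ℝ)*t - (n:ℝ)*z))
          (-((n:ℝ) * Dg ((n:ℝ)*t - (n:ℝ)*z))) z := by
        intro z
        have hlin : HasDerivAt (fun z : ℝ => (n:ℝ)*t - (n:ℝ)*z) (-(n:ℝ)) z := by
          simpa using ((hasDerivAt_id z).const_mul (n:ℝ)).const_sub ((n:ℝ)*t)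
        have h2 := (hasDerivAt_Lg ((n:ℝ)*t - (n:ℝ)*z)).comp z hlin
        rw [show -((n:ℝ) * Dg ((n:ℝ)*t - (n:ℝ)*z)) = Dg ((n:ℝ)*t - (n:ℝ)*z) * -(n:ℝ) by ring]
        exact h2
      -- derivative of the mixture
      have hDsum : HasDerivAt (fun u : ℝ => ∑ i : Fin N,
          (F (i.1+1) - F i.1) * (1 + Real.exp (-((n:ℝ) * u + -((n:ℝ) * cc (i.1+1)))))⁻¹)
          (∑ i : Fin N, (F (i.1+1) - F i.1) * (Dg ((n:ℝ) * t + -((n:ℝ) * cc (i.1+1))) * (n:ℝ))) t := by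
        apply HasDerivAt.fun_sum
        intro i _
        have hlin : HasDerivAt (fun u : ℝ => (n:ℝ) * u + -((n:ℝ) * cc (i.1+1))) (n:ℝ) t := by
          simpa using ((hasDerivAt_id t).const_mul (n:ℝ)).add_const (-((n:ℝ) * cc (i.1+1)))
        have h2 := (hasDerivAt_Lg ((n:ℝ) * t + -((n:ℝ) * cc (i.1+1)))).comp t hlin
        exact h2.const_mul (F (i.1+1) - F i.1)
      have hderiv : deriv (fun u : ℝ => ∑ i : Fin N,
          (F (i.1+1) - F i.1) * (1 + Real.exp (-((n:ℝ) * u + -((n:ℝ) * cc (i.1+1)))))⁻¹) t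
          = ∑ j ∈ Finset.range N, (F (j+1) - F j) * ((n:ℝ) * DD j) := by
        rw [hDsum.deriv]
        rw [← Fin.sum_univ_eq_sum_range (fun j => (F (j+1) - F j) * ((n:ℝ) * DD j)) N]
        apply Finset.sum_congr rfl
        intro i _
        have harg : (n:ℝ) * t + -((n:ℝ) * cc (i.1+1)) = (n:ℝ)*t - (n:ℝ)*cc (i.1+1) := by ring
        rw [harg]
        simp only [hDDdef]
        ring
      rw [hderiv]
      -- telescoping
      have htel : ∑ j ∈ Finset.range N, (Gx j - Gx (j+1)) = Gx 0 - Gx N :=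
        Finset.sum_range_sub' Gx N
      have hVsum : ∑ j ∈ Finset.range N,
            ((F (j+1) - F j) * ((n:ℝ) * DD j) - deriv f t * (Gx j - Gx (j+1)))
          = (∑ j ∈ Finset.range N, (F (j+1) - F j) * ((n:ℝ) * DD j))
            - deriv f t * (Gx 0 - Gx N) := by
        rw [Finset.sum_sub_distrib, ← Finset.mul_sum, htel]
      have heq2 : deriv f t - ∑ j ∈ Finset.range N, (F (j+1) - F j) * ((n:ℝ) * DD j)
          = deriv f t * (1 - (Gx 0 - Gx N))
            - ∑ j ∈ Finset.range N,
              ((F (j+1) - F j) * ((n:ℝ) * DD j) - deriv f t * (Gx j - Gx (j+1))) := by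
        rw [hVsum]; ring
      rw [heq2]
      -- reference bound
      have href : |1 - (Gx 0 - Gx N)| ≤ 2*Real.exp (-(1*(n:ℝ))) := by
        have h1 : 1 - Gx 0 ≤ Real.exp (-(1*(n:ℝ))) := by
          simp only [hGxdef]
          refine (one_sub_Lg_le _).trans (Real.exp_le_exp.mpr ?_)
          have h5 : (n:ℝ)*1 ≤ (n:ℝ)*(t - X 0) := mul_le_mul_of_nonneg_left htX0 hn0R.le
          linarith only [h5]
        have h2 : Gx N ≤ Real.exp (-(1*(n:ℝ))) := by
          simp only [hGxdef]
          refine (Lg_le_exp _).trans (Real.exp_le_exp.mpr ?_)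
          have h5 : (n:ℝ)*1 ≤ (n:ℝ)*(X N - t) := mul_le_mul_of_nonneg_left htXN hn0R.le
          linarith only [h5]
        rw [abs_of_nonneg (by linarith only [hGxle1 0, hGxnn N])]
        linarith only [h1, h2]
      have hd1 : |deriv f t * (1 - (Gx 0 - Gx N))| ≤ B * (2*Real.exp (-(1*(n:ℝ)))) := by
        rw [abs_mul]
        exact mul_le_mul hBt href (abs_nonneg _) (by linarith only [hB1])
      obtain ⟨m2, hm2⟩ : ∃ m2, N = m2 + 2 := ⟨N - 2, by omega⟩
      -- split the sum
      have hsplit2 : ∑ j ∈ Finset.range N,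
            ((F (j+1) - F j) * ((n:ℝ) * DD j) - deriv f t * (Gx j - Gx (j+1)))
          = ((F 1 - F 0) * ((n:ℝ) * DD 0) - deriv f t * (Gx 0 - Gx 1))
            + (∑ i ∈ Finset.range m2, ((F (i+1+1) - F (i+1)) * ((n:ℝ) * DD (i+1))
                - deriv f t * (Gx (i+1) - Gx (i+1+1))))
            + ((F (m2+1+1) - F (m2+1)) * ((n:ℝ) * DD (m2+1))
                - deriv f t * (Gx (m2+1) - Gx (m2+1+1))) := by
        rw [hm2, Finset.sum_range_succ, Finset.sum_range_succ']
        ring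
      -- boundary term 0
      have hbd0 : |(F 1 - F 0) * ((n:ℝ) * DD 0) - deriv f t * (Gx 0 - Gx 1)|
          ≤ ((n:ℝ) + B) * Real.exp (-(1*(n:ℝ))) := by
        have hD0 : DD 0 ≤ Real.exp (-(1*(n:ℝ))) := by
          have h4 : DD 0 = Dg ((n:ℝ)*t - (n:ℝ)*cc 1) := by norm_num [hDDdef]
          rw [h4]
          refine (Dg_le_exp_neg _).trans (Real.exp_le_exp.mpr ?_)
          have h5 : (n:ℝ)*1 ≤ (n:ℝ)*(t - cc 1) := mul_le_mul_of_nonneg_left htc1 hn0R.le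
          linarith only [h5]
        have ha1 : |(F 1 - F 0) * ((n:ℝ) * DD 0)| ≤ (n:ℝ) * Real.exp (-(1*(n:ℝ))) := by
          rw [abs_of_nonneg (mul_nonneg (by linarith only [hF0 ▸ hFnonneg 1, hFnonneg 0,
              (hF0 : F 0 = 0) ] : (0:ℝ) ≤ F 1 - F 0) (mul_nonneg hn0R.le (hDDnn 0)))]
          have h6 : (F 1 - F 0) * ((n:ℝ) * DD 0) ≤ 1 * ((n:ℝ) * DD 0) :=
            mul_le_mul_of_nonneg_right (by linarith only [hFle1 1, hFnonneg 0])
              (mul_nonneg hn0R.le (hDDnn 0))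
          have h7 : (n:ℝ) * DD 0 ≤ (n:ℝ) * Real.exp (-(1*(n:ℝ))) :=
            mul_le_mul_of_nonneg_left hD0 hn0R.le
          linarith only [h6, h7]
        have ha2 : |deriv f t * (Gx 0 - Gx 1)| ≤ B * Real.exp (-(1*(n:ℝ))) := by
          rw [abs_mul]
          have h7 : |Gx 0 - Gx 1| ≤ Real.exp (-(1*(n:ℝ))) := by
            rw [abs_of_nonneg (by linarith only [hGxmono 0 1 (by omega)])]
            have h8 : 1 - Gx 1 ≤ Real.exp (-(1*(n:ℝ))) := by
              simp only [hGxdef]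
              refine (one_sub_Lg_le _).trans (Real.exp_le_exp.mpr ?_)
              have h5 : (n:ℝ)*1 ≤ (n:ℝ)*(t - X 1) := mul_le_mul_of_nonneg_left htX1 hn0R.le
              linarith only [h5]
            linarith only [h8, hGxle1 0]
          have h9 : |deriv f t| * |Gx 0 - Gx 1| ≤ B * |Gx 0 - Gx 1| :=
            mul_le_mul_of_nonneg_right hBt (abs_nonneg _)
          have h10 : B * |Gx 0 - Gx 1| ≤ B * Real.exp (-(1*(n:ℝ))) :=
            mul_le_mul_of_nonneg_left h7 (by linarith only [hB1])
          linarith only [h9, h10]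
        refine (htri2 _ _).trans ?_
        linarith only [ha1, ha2]
      -- boundary term last
      have hbd1 : |(F (m2+1+1) - F (m2+1)) * ((n:ℝ) * DD (m2+1))
            - deriv f t * (Gx (m2+1) - Gx (m2+1+1))|
          ≤ ((n:ℝ) + B) * Real.exp (-(1*(n:ℝ))) := by
        have hDlast : DD (m2+1) ≤ Real.exp (-(1*(n:ℝ))) := by
          have h4 : DD (m2+1) = Dg ((n:ℝ)*t - (n:ℝ)*cc N) := by
            simp only [hDDdef]
            rw [show m2+1+1 = N from by omega]
          rw [h4]
          refine (Dg_le_exp _).trans (Real.exp_le_exp.mpr ?_)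
          have h5 : (n:ℝ)*1 ≤ (n:ℝ)*(cc N - t) := mul_le_mul_of_nonneg_left htcN hn0R.le
          linarith only [h5]
        have ha1 : |(F (m2+1+1) - F (m2+1)) * ((n:ℝ) * DD (m2+1))|
            ≤ (n:ℝ) * Real.exp (-(1*(n:ℝ))) := by
          have hFm : F (m2+1+1) = 1 := by rw [show m2+1+1 = N from by omega]; exact hFN
          rw [abs_of_nonneg (mul_nonneg (by linarith only [hFm, hFle1 (m2+1)] : (0:ℝ) ≤ F (m2+1+1) - F (m2+1))
            (mul_nonneg hn0R.le (hDDnn (m2+1))))]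
          have h6 : (F (m2+1+1) - F (m2+1)) * ((n:ℝ) * DD (m2+1)) ≤ 1 * ((n:ℝ) * DD (m2+1)) :=
            mul_le_mul_of_nonneg_right (by linarith only [hFm, hFnonneg (m2+1)])
              (mul_nonneg hn0R.le (hDDnn (m2+1)))
          have h7 : (n:ℝ) * DD (m2+1) ≤ (n:ℝ) * Real.exp (-(1*(n:ℝ))) :=
            mul_le_mul_of_nonneg_left hDlast hn0R.le
          linarith only [h6, h7]
        have ha2 : |deriv f t * (Gx (m2+1) - Gx (m2+1+1))| ≤ B * Real.exp (-(1*(n:ℝ))) := by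
          rw [abs_mul]
          have h7 : |Gx (m2+1) - Gx (m2+1+1)| ≤ Real.exp (-(1*(n:ℝ))) := by
            rw [abs_of_nonneg (by linarith only [hGxmono (m2+1) (m2+1+1) (by omega)])]
            have h8 : Gx (m2+1) ≤ Real.exp (-(1*(n:ℝ))) := by
              have h4 : Gx (m2+1) = Lg ((n:ℝ)*t - (n:ℝ)*X (N-1)) := by
                simp only [hGxdef]
                rw [show m2+1 = N-1 from by omega]
              rw [h4]
              refine (Lg_le_exp _).trans (Real.exp_le_exp.mpr ?_)
              have h5 : (n:ℝ)*1 ≤ (n:ℝ)*(X (N-1) - t) := mul_le_mul_of_nonneg_left htXN1 hn0R.le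
              linarith only [h5]
            linarith only [h8, hGxnn (m2+1+1)]
          have h9 : |deriv f t| * |Gx (m2+1) - Gx (m2+1+1)| ≤ B * |Gx (m2+1) - Gx (m2+1+1)| :=
            mul_le_mul_of_nonneg_right hBt (abs_nonneg _)
          have h10 : B * |Gx (m2+1) - Gx (m2+1+1)| ≤ B * Real.exp (-(1*(n:ℝ))) :=
            mul_le_mul_of_nonneg_left h7 (by linarith only [hB1])
          linarith only [h9, h10]
        refine (htri2 _ _).trans ?_
        linarith only [ha1, ha2]
      -- middle terms
      set co := ε/16 + B*(Real.exp (1/(n:ℝ)) - 1) with hcodef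
      have hco : 0 ≤ co := by
        rw [hcodef]
        have h1 := Real.one_le_exp (by positivity : (0:ℝ) ≤ 1/(n:ℝ))
        have h2 : 0 ≤ B*(Real.exp (1/(n:ℝ)) - 1) :=
          mul_nonneg (by linarith only [hB1]) (by linarith only [h1])
        linarith only [h2, hε]
      have hco3 : co * 3 ≤ 3*ε/16 + 3*B*(Real.exp (1/(n:ℝ)) - 1) := by
        rw [hcodef]; ring_nf; linarith only []
      clear_value co
      have hmid : ∀ i ∈ Finset.range m2,
          |(F (i+1+1) - F (i+1)) * ((n:ℝ) * DD (i+1)) - deriv f t * (Gx (i+1) - Gx (i+1+1))|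
          ≤ co * (3 * (Gx (i+1) - Gx (i+1+1))) + Δ*(n:ℝ)*(2*B*Real.exp (-(r*(n:ℝ)))) := by
        intro i hi
        have him : i < m2 := Finset.mem_range.mp hi
        set k := i + 1 with hk
        have hk1N : k + 1 < N := by omega
        have hkN : k < N := by omega
        have hFk : F (k+1) - F k = f (X (k+1)) - f (X k) := by
          rw [hFmid (k+1) (by omega) (by omega), hFmid k (by omega) (by omega)]
        -- MVT for f
        obtain ⟨ξ, hξm, hξ⟩ := exists_hasDerivAt_eq_slope f (deriv f) (hXlt k)
          hfc.continuousOn (fun x _ => (hfd x).hasDerivAt)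
        have hfse : f (X (k+1)) - f (X k) = Δ * deriv f ξ := by
          rw [hξ, hXd k]
          field_simp
        -- MVT for Lg
        obtain ⟨η, hηm, hη⟩ := exists_hasDerivAt_eq_slope
          (fun z : ℝ => Lg ((n:ℝ)*t - (n:ℝ)*z))
          (fun z : ℝ => -((n:ℝ) * Dg ((n:ℝ)*t - (n:ℝ)*z))) (hXlt k)
          (fun z _ => (hφd z).continuousAt.continuousWithinAt) (fun z _ => hφd z)
        have h' : -((n:ℝ) * Dg ((n:ℝ)*t - (n:ℝ)*η))
            = (Lg ((n:ℝ)*t - (n:ℝ)*X (k+1)) - Lg ((n:ℝ)*t - (n:ℝ)*X k)) / (X (k+1) - X k) := hη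
        rw [hXd k, eq_div_iff hΔpos.ne'] at h'
        have hGxk : Gx k - Gx (k+1) = Δ * ((n:ℝ) * Dg ((n:ℝ)*t - (n:ℝ)*η)) := by
          have hgx1 : Gx k = Lg ((n:ℝ)*t - (n:ℝ)*X k) := by simp only [hGxdef]
          have hgx2 : Gx (k+1) = Lg ((n:ℝ)*t - (n:ℝ)*X (k+1)) := by simp only [hGxdef]
          rw [hgx1, hgx2]
          linarith only [h']
        set α := (n:ℝ)*t - (n:ℝ)*cc (k+1) with hα
        set β := (n:ℝ)*t - (n:ℝ)*η with hβ
        have hDDk : DD k = Dg α := by simp only [hDDdef, hα]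
        have hccm : cc (k+1) = X k + Δ/2 := hccX k
        have hXk1 : X (k+1) = X k + Δ := by have h0 := hXd k; linarith only [h0]
        have hsc : |η - cc (k+1)| ≤ Δ := by
          rw [abs_le]
          constructor
          · linarith only [hηm.1, hccm, hΔpos]
          · linarith only [hηm.2, hccm, hXk1, hΔpos]
        have habk : |α - β| ≤ (n:ℝ)*Δ := by
          have h1 : α - β = (n:ℝ)*(η - cc (k+1)) := by rw [hα, hβ]; ring
          rw [h1, abs_mul, abs_of_nonneg hn0R.le]
          exact mul_le_mul_of_nonneg_left hsc hn0R.le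
        have hexpnΔ : Real.exp |α - β| ≤ Real.exp (1/(n:ℝ)) := by
          apply Real.exp_le_exp.mpr
          linarith only [habk, hΔn]
        have hDgdiff : |Dg α - Dg β| ≤ (Real.exp (1/(n:ℝ)) - 1) * Dg α := by
          refine (Dg_diff_le α β).trans ?_
          apply mul_le_mul_of_nonneg_right _ (Dg_nonneg α)
          linarith only [hexpnΔ]
        have hDge : Dg α ≤ 3 * Dg β := by
          have h1 := Dg_le_exp_mul β α
          have h2 : Real.exp |α - β| ≤ 3 := by
            have h3 : Real.exp |α - β| ≤ Real.exp 1 := by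
              refine hexpnΔ.trans (Real.exp_le_exp.mpr h1nle1)
            have h4 := Real.exp_one_lt_d9
            linarith only [h3, h4]
          have h5 : Real.exp |α - β| * Dg β ≤ 3 * Dg β :=
            mul_le_mul_of_nonneg_right h2 (Dg_nonneg β)
          linarith only [h1, h5]
        have hξK : ξ ∈ Set.Icc (s0-3) (s1+3) := by
          have hXkK := hXK k (by omega)
          have hXk1K := hXK (k+1) (by omega)
          constructor
          · linarith only [hξm.1, hXkK.1]
          · linarith only [hξm.2, hXk1K.2]
        have hdf : |deriv f ξ - deriv f t| * Dg α
            ≤ ε/16 * Dg α + 2*B*Real.exp (-(r*(n:ℝ))) := by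
          have hBnn : (0:ℝ) ≤ B := by linarith only [hB1]
          by_cases hnear : |cc (k+1) - t| ≤ r
          · have h1 : |deriv f ξ - deriv f t| ≤ ε/16 := by
              apply hmodd ξ hξK t htK
              rw [abs_le] at hnear
              rw [abs_lt]
              constructor
              · linarith only [hξm.1, hccm, hnear.1, hΔr, hr0, hrδ2]
              · linarith only [hξm.2, hccm, hXk1, hnear.2, hΔr, hr0, hrδ2]
            have h2 : (0:ℝ) ≤ 2*B*Real.exp (-(r*(n:ℝ))) :=
              mul_nonneg (mul_nonneg (by norm_num) hBnn) (Real.exp_pos _).le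
            have h3 := mul_le_mul_of_nonneg_right h1 (Dg_nonneg α)
            linarith only [h2, h3]
          · push_neg at hnear
            have h1 : |deriv f ξ - deriv f t| ≤ 2*B := by
              refine (htri2 _ _).trans ?_
              linarith only [hB ξ hξK, hBt]
            have h2 : Dg α ≤ Real.exp (-(r*(n:ℝ))) := by
              refine (Dg_le_exp_neg_abs α).trans (Real.exp_le_exp.mpr ?_)
              have h5 : r ≤ |t - cc (k+1)| := by
                rw [abs_sub_comm] at hnear
                linarith only [hnear]
              have h6 : (n:ℝ) * r ≤ (n:ℝ) * |t - cc (k+1)| :=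
                mul_le_mul_of_nonneg_left h5 hn0R.le
              have h7 : |α| = (n:ℝ) * |t - cc (k+1)| := by
                have h8 : α = (n:ℝ)*(t - cc (k+1)) := by rw [hα]; ring
                rw [h8, abs_mul, abs_of_nonneg hn0R.le]
              linarith only [h6, h7]
            have h3 : |deriv f ξ - deriv f t| * Dg α ≤ 2*B*Real.exp (-(r*(n:ℝ))) := by
              have h8 : |deriv f ξ - deriv f t| * Dg α ≤ 2*B * Dg α :=
                mul_le_mul_of_nonneg_right h1 (Dg_nonneg α)
              have h9 : 2*B*Dg α ≤ 2*B*Real.exp (-(r*(n:ℝ))) :=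
                mul_le_mul_of_nonneg_left h2 (by linarith only [hB1])
              linarith only [h8, h9]
            have h4 : 0 ≤ ε/16 * Dg α := mul_nonneg (by linarith only [hε]) (Dg_nonneg α)
            linarith only [h3, h4]
        have hterm_eq : (F (k+1) - F k) * ((n:ℝ) * DD k) - deriv f t * (Gx k - Gx (k+1))
            = Δ*(n:ℝ) * (deriv f ξ * Dg α - deriv f t * Dg β) := by
          rw [hFk, hfse, hGxk, hDDk, hβ]
          ring
        rw [hterm_eq, abs_mul, abs_of_nonneg (mul_nonneg hΔpos.le hn0R.le)]
        have hxy : |deriv f ξ * Dg α - deriv f t * Dg β|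
            ≤ |deriv f ξ - deriv f t| * Dg α + B * ((Real.exp (1/(n:ℝ)) - 1) * Dg α) := by
          have hid : deriv f ξ * Dg α - deriv f t * Dg β
              = (deriv f ξ - deriv f t) * Dg α + deriv f t * (Dg α - Dg β) := by ring
          rw [hid]
          refine (abs_add_le _ _).trans ?_
          have j1 : |(deriv f ξ - deriv f t) * Dg α| = |deriv f ξ - deriv f t| * Dg α := by
            rw [abs_mul, abs_of_nonneg (Dg_nonneg α)]
          have j2 : |deriv f t * (Dg α - Dg β)| ≤ B * ((Real.exp (1/(n:ℝ)) - 1) * Dg α) := by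
            rw [abs_mul]
            exact mul_le_mul hBt hDgdiff (abs_nonneg _) (by linarith only [hB1])
          linarith only [j1, j2]
        have hcomb : |deriv f ξ * Dg α - deriv f t * Dg β|
            ≤ co * Dg α + 2*B*Real.exp (-(r*(n:ℝ))) := by
          rw [hcodef]
          linarith only [hxy, hdf]
        have hΔnDg : Δ*(n:ℝ)*Dg α ≤ 3 * (Gx k - Gx (k+1)) := by
          rw [hGxk]
          have h1 : Δ*(n:ℝ)*Dg α ≤ Δ*(n:ℝ)*(3*Dg β) :=
            mul_le_mul_of_nonneg_left hDge (mul_nonneg hΔpos.le hn0R.le)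
          have h2 : Dg ((n:ℝ)*t - (n:ℝ)*η) = Dg β := by rw [hβ]
          rw [h2]
          linarith only [h1]
        have hm1 := mul_le_mul_of_nonneg_left hcomb (mul_nonneg hΔpos.le hn0R.le)
        have hm2 := mul_le_mul_of_nonneg_left hΔnDg hco
        linarith only [hm1, hm2]
      -- sum of middle terms
      have hmidsum : |∑ i ∈ Finset.range m2,
            ((F (i+1+1) - F (i+1)) * ((n:ℝ) * DD (i+1)) - deriv f t * (Gx (i+1) - Gx (i+1+1)))|
          ≤ co * 3 + 2*B*C*(n:ℝ)*Real.exp (-(r*(n:ℝ))) := by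
        have c1 := Finset.abs_sum_le_sum_abs
          (fun i => (F (i+1+1) - F (i+1)) * ((n:ℝ) * DD (i+1))
            - deriv f t * (Gx (i+1) - Gx (i+1+1))) (Finset.range m2)
        have c2 := Finset.sum_le_sum hmid
        have htel2 : ∑ i ∈ Finset.range m2, (Gx (i+1) - Gx (i+1+1)) = Gx 1 - Gx (m2+1) := by
          have h := Finset.sum_range_sub' (fun j => Gx (j+1)) m2
          simpa using h
        have c3 : ∑ i ∈ Finset.range m2,
              (co * (3 * (Gx (i+1) - Gx (i+1+1))) + Δ*(n:ℝ)*(2*B*Real.exp (-(r*(n:ℝ)))))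
            = (co*3) * (Gx 1 - Gx (m2+1)) + (m2:ℝ) * (Δ*(n:ℝ)*(2*B*Real.exp (-(r*(n:ℝ))))) := by
          rw [Finset.sum_add_distrib, Finset.sum_const, Finset.card_range, nsmul_eq_mul]
          congr 1
          have hc : ∀ i ∈ Finset.range m2, co * (3 * (Gx (i+1) - Gx (i+1+1)))
              = (co*3) * (Gx (i+1) - Gx (i+1+1)) := fun i _ => by ring
          rw [Finset.sum_congr rfl hc, ← Finset.mul_sum, htel2]
        have c4 : (co*3) * (Gx 1 - Gx (m2+1)) ≤ (co*3) * 1 :=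
          mul_le_mul_of_nonneg_left (by linarith only [hGxle1 1, hGxnn (m2+1)])
            (by linarith only [hco])
        have hBnn : (0:ℝ) ≤ B := by linarith only [hB1]
        have hm2N : (m2:ℝ) ≤ (N:ℝ) := by exact_mod_cast (by omega : m2 ≤ N)
        have c5 : (m2:ℝ)*Δ ≤ C := by
          have h1 : (m2:ℝ)*Δ ≤ (N:ℝ)*Δ := mul_le_mul_of_nonneg_right hm2N hΔpos.le
          linarith only [h1, hNΔ]
        have c6 : (m2:ℝ)*Δ*((n:ℝ)*(2*B*Real.exp (-(r*(n:ℝ)))))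
            ≤ C*((n:ℝ)*(2*B*Real.exp (-(r*(n:ℝ))))) :=
          mul_le_mul_of_nonneg_right c5
            (mul_nonneg hn0R.le (mul_nonneg (mul_nonneg (by norm_num) hBnn) (Real.exp_pos _).le))
        calc |∑ i ∈ Finset.range m2,
              ((F (i+1+1) - F (i+1)) * ((n:ℝ) * DD (i+1)) - deriv f t * (Gx (i+1) - Gx (i+1+1)))|
            ≤ (co*3) * (Gx 1 - Gx (m2+1)) + (m2:ℝ) * (Δ*(n:ℝ)*(2*B*Real.exp (-(r*(n:ℝ))))) := by
              rw [← c3]; exact c1.trans c2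
        _ ≤ co * 3 + 2*B*C*(n:ℝ)*Real.exp (-(r*(n:ℝ))) := by
              linarith only [c4, c6]
      -- final assembly
      have h10 := htri2 (deriv f t * (1 - (Gx 0 - Gx N)))
        (∑ j ∈ Finset.range N,
          ((F (j+1) - F j) * ((n:ℝ) * DD j) - deriv f t * (Gx j - Gx (j+1))))
      have h11 : |∑ j ∈ Finset.range N,
            ((F (j+1) - F j) * ((n:ℝ) * DD j) - deriv f t * (Gx j - Gx (j+1)))|
          ≤ ((n:ℝ) + B) * Real.exp (-(1*(n:ℝ)))
            + (co * 3 + 2*B*C*(n:ℝ)*Real.exp (-(r*(n:ℝ))))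
            + ((n:ℝ) + B) * Real.exp (-(1*(n:ℝ))) := by
        rw [hsplit2]
        have h12 := abs_add_three
          ((F 1 - F 0) * ((n:ℝ) * DD 0) - deriv f t * (Gx 0 - Gx 1))
          (∑ i ∈ Finset.range m2, ((F (i+1+1) - F (i+1)) * ((n:ℝ) * DD (i+1))
            - deriv f t * (Gx (i+1) - Gx (i+1+1))))
          ((F (m2+1+1) - F (m2+1)) * ((n:ℝ) * DD (m2+1))
            - deriv f t * (Gx (m2+1) - Gx (m2+1+1)))
        have h13 := hbd0
        have h14 := hbd1
        have h15 := hmidsum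
        linarith only [h12, h13, h14, h15]
      have hrn : Real.exp (-(1*(n:ℝ))) ≤ Real.exp (-(r*(n:ℝ))) := by
        apply Real.exp_le_exp.mpr
        have h1 := mul_le_mul_of_nonneg_right hr1 hn0R.le
        linarith only [h1]
      have h16 : (2*(n:ℝ)+4*B)*Real.exp (-(1*(n:ℝ))) ≤ (2*(n:ℝ)+4*B)*Real.exp (-(r*(n:ℝ))) :=
        mul_le_mul_of_nonneg_left hrn (by linarith only [hn0R, hB1])
      have hfinal := (htri2 _ _).trans (add_le_add hd1 h11)
      refine lt_of_le_of_lt hfinal ?_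
      linarith only [h16, e3, e4, hε, hco3]
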